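/- There exists a constant C > 0 such that for every natural number k ≥ 2 and every real M ≥ 1, there exists a finite set S of vectors in ℝ^k with ‖v‖ = 1 for every v ∈ S, with cardinality (|S| : ℝ) ≥ k^M, such that for all distinct u, v ∈ S, √2 − C·√(M·log k / k) ≤ ‖u − v‖ ≤ √2 + C·√(M·log k / k). -/

import Mathlib

lemma KL_mgf (k : ℕ) (s : ℝ) :
    ∑ j ∈ Finset.range (k+1), (k.choose j : ℝ) *
      (Real.exp (s * (k - 2*j)) + Real.exp (s * (2*j - k)))
      = 2 * (Real.exp s + Real.exp (-s)) ^ k := by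
  have key : ∀ x y : ℝ, (x + y) ^ k
      = ∑ j ∈ Finset.range (k+1), (k.choose j : ℝ) * (x ^ j * y ^ (k - j)) := by
    intro x y
    rw [add_pow]
    exact Finset.sum_congr rfl fun j hj => by ring
  have hterm : ∀ j ∈ Finset.range (k+1),
      (k.choose j : ℝ) * (Real.exp (s * (k - 2*j)) + Real.exp (s * (2*j - k)))
      = (k.choose j : ℝ) * ((Real.exp (-s)) ^ j * (Real.exp s) ^ (k - j))
        + (k.choose j : ℝ) * ((Real.exp s) ^ j * (Real.exp (-s)) ^ (k - j)) := by
    intro j hj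
    have hjk : j ≤ k := Nat.lt_succ_iff.mp (Finset.mem_range.mp hj)
    have h1 : (Real.exp (-s)) ^ j * (Real.exp s) ^ (k - j) = Real.exp (s * (k - 2*j)) := by
      rw [← Real.exp_nat_mul, ← Real.exp_nat_mul, ← Real.exp_add]
      congr 1
      have : ((k - j : ℕ) : ℝ) = (k : ℝ) - j := by
        push_cast [Nat.cast_sub hjk]; ring
      rw [this]; ring
    have h2 : (Real.exp s) ^ j * (Real.exp (-s)) ^ (k - j) = Real.exp (s * (2*j - k)) := by
      rw [← Real.exp_nat_mul, ← Real.exp_nat_mul, ← Real.exp_add]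
      congr 1
      have : ((k - j : ℕ) : ℝ) = (k : ℝ) - j := by
        push_cast [Nat.cast_sub hjk]; ring
      rw [this]; ring
    rw [h1, h2]; ring
  rw [Finset.sum_congr rfl hterm, Finset.sum_add_distrib, ← key, ← key]
  ring

lemma KL_exp_pair {s : ℝ} (hs : |s| ≤ 1) :
    Real.exp s + Real.exp (-s) ≤ 2 * Real.exp (3/4 * s^2) := by
  have h1 := Real.exp_bound hs (n := 2) (by norm_num)
  have h2 := Real.exp_bound (x := -s) (by rwa [abs_neg]) (n := 2) (by norm_num)
  rw [Finset.sum_range_succ, Finset.sum_range_succ, Finset.sum_range_zero] at h1 h2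
  norm_num [Nat.factorial] at h1 h2
  have e1 : Real.exp s ≤ 1 + s + 3/4 * s^2 := by
    have := (abs_sub_le_iff.1 h1).1
    nlinarith [sq_abs s, abs_nonneg s]
  have e2 : Real.exp (-s) ≤ 1 - s + 3/4 * s^2 := by
    have := (abs_sub_le_iff.1 h2).1
    nlinarith [sq_abs s, abs_nonneg s]
  have e3 : 1 + 3/4 * s^2 ≤ Real.exp (3/4 * s^2) := by
    have := Real.add_one_le_exp (3/4 * s^2); linarith
  linarith

lemma KL_tail (k : ℕ) {δ s : ℝ} (hs0 : 0 ≤ s) (hs1 : s ≤ 1) (hδ : 0 ≤ δ) :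
    ∑ j ∈ (Finset.range (k+1)).filter
        (fun j : ℕ => 2*(j:ℝ) < (1-δ)*k ∨ (1+δ)*(k:ℝ) < 2*j), (k.choose j : ℝ)
      ≤ 2 * 2^k * Real.exp (3/4 * s^2 * (k:ℝ) - s*δ*k) := by
  set F : ℕ → ℝ := fun j => Real.exp (-(s*δ*(k:ℝ))) * ((k.choose j : ℝ) *
      (Real.exp (s * ((k:ℝ) - 2*j)) + Real.exp (s * (2*(j:ℝ) - k)))) with hF
  have hFnonneg : ∀ j, 0 ≤ F j := by
    intro j
    apply mul_nonneg (Real.exp_nonneg _)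
    apply mul_nonneg (Nat.cast_nonneg _)
    positivity
  have step1 : ∑ j ∈ (Finset.range (k+1)).filter
        (fun j : ℕ => 2*(j:ℝ) < (1-δ)*k ∨ (1+δ)*(k:ℝ) < 2*j), (k.choose j : ℝ)
      ≤ ∑ j ∈ Finset.range (k+1), F j := by
    refine le_trans (Finset.sum_le_sum ?_)
      (Finset.sum_le_sum_of_subset_of_nonneg (Finset.filter_subset _ _)
        (fun j _ _ => hFnonneg j))
    intro j hj
    obtain ⟨hjr, hbad⟩ := Finset.mem_filter.mp hj
    have hchoose : (0:ℝ) ≤ (k.choose j : ℝ) := Nat.cast_nonneg _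
    rcases hbad with hlo | hhi
    · have h1 : s*δ*(k:ℝ) ≤ s * ((k:ℝ) - 2*j) := by
        have hd : δ*(k:ℝ) ≤ (k:ℝ) - 2*j := by nlinarith
        nlinarith [mul_le_mul_of_nonneg_left hd hs0]
      have h2 : (1:ℝ) ≤ Real.exp (-(s*δ*(k:ℝ))) * Real.exp (s * ((k:ℝ) - 2*j)) := by
        rw [← Real.exp_add]
        refine Real.one_le_exp (by linarith)
      have h3 : 0 ≤ Real.exp (-(s*δ*(k:ℝ))) * Real.exp (s * (2*(j:ℝ) - k)) := by positivity
      calc (k.choose j : ℝ) = (k.choose j : ℝ) * 1 := by ring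
        _ ≤ (k.choose j : ℝ) * (Real.exp (-(s*δ*(k:ℝ))) * Real.exp (s * ((k:ℝ) - 2*j))
              + Real.exp (-(s*δ*(k:ℝ))) * Real.exp (s * (2*(j:ℝ) - k))) := by
            apply mul_le_mul_of_nonneg_left _ hchoose
            linarith
        _ = F j := by rw [hF]; ring
    · have h1 : s*δ*(k:ℝ) ≤ s * (2*(j:ℝ) - k) := by
        have hd : δ*(k:ℝ) ≤ 2*(j:ℝ) - k := by nlinarith
        nlinarith [mul_le_mul_of_nonneg_left hd hs0]
      have h2 : (1:ℝ) ≤ Real.exp (-(s*δ*(k:ℝ))) * Real.exp (s * (2*(j:ℝ) - k)) := by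
        rw [← Real.exp_add]
        refine Real.one_le_exp (by linarith)
      have h3 : 0 ≤ Real.exp (-(s*δ*(k:ℝ))) * Real.exp (s * ((k:ℝ) - 2*j)) := by positivity
      calc (k.choose j : ℝ) = (k.choose j : ℝ) * 1 := by ring
        _ ≤ (k.choose j : ℝ) * (Real.exp (-(s*δ*(k:ℝ))) * Real.exp (s * ((k:ℝ) - 2*j))
              + Real.exp (-(s*δ*(k:ℝ))) * Real.exp (s * (2*(j:ℝ) - k))) := by
            apply mul_le_mul_of_nonneg_left _ hchoose
            linarith
        _ = F j := by rw [hF]; ring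
  have step2 : ∑ j ∈ Finset.range (k+1), F j
      = Real.exp (-(s*δ*(k:ℝ))) * (2 * (Real.exp s + Real.exp (-s)) ^ k) := by
    rw [hF, ← Finset.mul_sum, KL_mgf]
  have step3 : (Real.exp s + Real.exp (-s)) ^ k ≤ (2 * Real.exp (3/4 * s^2)) ^ k := by
    apply pow_le_pow_left₀ (by positivity) (KL_exp_pair (abs_le.mpr ⟨by linarith, hs1⟩))
  have hfin : Real.exp (-(s*δ*(k:ℝ))) * (2 * (2 * Real.exp (3/4 * s^2)) ^ k)
      = 2 * 2^k * Real.exp (3/4 * s^2 * (k:ℝ) - s*δ*k) := by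
    rw [mul_pow, ← Real.exp_nat_mul, ← mul_assoc]
    rw [show (3:ℝ)/4 * s^2 * (k:ℝ) - s*δ*k = -(s*δ*(k:ℝ)) + (k:ℝ) * (3/4 * s^2) by ring,
      Real.exp_add]
    ring
  calc ∑ j ∈ (Finset.range (k+1)).filter
        (fun j : ℕ => 2*(j:ℝ) < (1-δ)*k ∨ (1+δ)*(k:ℝ) < 2*j), (k.choose j : ℝ)
      ≤ ∑ j ∈ Finset.range (k+1), F j := step1
    _ = Real.exp (-(s*δ*(k:ℝ))) * (2 * (Real.exp s + Real.exp (-s)) ^ k) := step2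
    _ ≤ Real.exp (-(s*δ*(k:ℝ))) * (2 * (2 * Real.exp (3/4 * s^2)) ^ k) := by
        apply mul_le_mul_of_nonneg_left _ (Real.exp_nonneg _)
        apply mul_le_mul_of_nonneg_left step3 (by norm_num)
    _ = 2 * 2^k * Real.exp (3/4 * s^2 * (k:ℝ) - s*δ*k) := hfin


open Finset

lemma KL_sphere_card (k : ℕ) (x : Fin k → Bool) (j : ℕ) :
    (Finset.univ.filter (fun y : Fin k → Bool => hammingDist x y = j)).card
      = k.choose j := by
  have h := Finset.card_powersetCard j (Finset.univ : Finset (Fin k))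
  rw [Finset.card_univ, Fintype.card_fin] at h
  rw [← h]
  · apply Finset.card_bij'
      (i := fun y _ => Finset.univ.filter (fun i => x i ≠ y i))
      (j := fun A _ => fun i => if i ∈ A then !(x i) else x i)
    · intro y hy
      rw [Finset.mem_powersetCard]
      refine ⟨Finset.filter_subset _ _ |>.trans (Finset.subset_univ _), ?_⟩
      have := (Finset.mem_filter.mp hy).2
      simpa [hammingDist] using this
    · intro A hA
      rw [Finset.mem_powersetCard] at hA
      rw [Finset.mem_filter]
      refine ⟨Finset.mem_univ _, ?_⟩
      rw [hammingDist, ← hA.2]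
      congr 1
      ext i
      by_cases h : i ∈ A <;> simp [h]
    · intro y hy
      funext i
      by_cases h : x i = y i <;> simp [h]
      · cases hx : x i <;> cases hy' : y i <;> simp_all
    · intro A hA
      ext i
      by_cases h : i ∈ A <;> simp [h]

lemma KL_greedy {α : Type*} [Fintype α] (G : α → α → Prop)
    [inst : ∀ x : α, DecidablePred (fun y => y ≠ x ∧ ¬ G x y)]
    (hsymm : ∀ x y, G x y → G y x) (B : ℝ)
    (hB : ∀ x : α, ((Finset.univ.filter (fun y => y ≠ x ∧ ¬ G x y)).card : ℝ) ≤ B) :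
    ∃ T : Finset α, (∀ u ∈ T, ∀ v ∈ T, u ≠ v → G u v) ∧
      (Fintype.card α : ℝ) ≤ (T.card : ℝ) * (1 + B) := by
  classical
  rcases isEmpty_or_nonempty α with hemp | hne'
  · exact ⟨∅, by simp, by simp⟩
  set P := Finset.univ.powerset.filter
    (fun T : Finset α => ∀ u ∈ T, ∀ v ∈ T, u ≠ v → G u v) with hP
  have hne : P.Nonempty := ⟨∅, by simp [hP]⟩
  obtain ⟨T, hTP, hTmax⟩ := Finset.exists_max_image P Finset.card hne
  have hTgood : ∀ u ∈ T, ∀ v ∈ T, u ≠ v → G u v := (Finset.mem_filter.mp hTP).2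
  refine ⟨T, hTgood, ?_⟩
  have hBnonneg : (0:ℝ) ≤ B := le_trans (Nat.cast_nonneg _) (hB (Classical.arbitrary α))
  -- every element is in T or in a bad ball of some element of T
  have hcover : (Finset.univ : Finset α) ⊆
      T ∪ T.biUnion (fun x => Finset.univ.filter (fun y => y ≠ x ∧ ¬ G x y)) := by
    intro y _
    by_cases hyT : y ∈ T
    · exact Finset.mem_union_left _ hyT
    by_cases hbad : ∃ x ∈ T, y ≠ x ∧ ¬ G x y
    · obtain ⟨x, hx, h1, h2⟩ := hbad
      exact Finset.mem_union_right _ (Finset.mem_biUnion.mpr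
        ⟨x, hx, Finset.mem_filter.mpr ⟨Finset.mem_univ _, h1, h2⟩⟩)
    -- otherwise insert y, contradiction with maximality
    push_neg at hbad
    exfalso
    have hgood' : ∀ x ∈ T, G x y := by
      intro x hx
      have h := hbad x hx
      by_cases hxy : y = x
      · exact absurd (hxy ▸ hx) hyT
      · exact h hxy
    have hins : insert y T ∈ P := by
      rw [hP, Finset.mem_filter]
      refine ⟨Finset.mem_powerset.mpr (Finset.subset_univ _), ?_⟩
      intro u hu v hv huv
      rcases Finset.mem_insert.mp hu with hu | hu <;>
        rcases Finset.mem_insert.mp hv with hv | hv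
      · exact absurd (hu.trans hv.symm) huv
      · exact hu ▸ hsymm _ _ (hgood' v hv)
      · exact hv ▸ hgood' u hu
      · exact hTgood u hu v hv huv
    have := hTmax _ hins
    rw [Finset.card_insert_of_notMem hyT] at this
    omega
  have hcard : Fintype.card α ≤ T.card +
      ∑ x ∈ T, (Finset.univ.filter (fun y => y ≠ x ∧ ¬ G x y)).card := by
    calc Fintype.card α = (Finset.univ : Finset α).card := (Finset.card_univ).symm
      _ ≤ (T ∪ T.biUnion _).card := Finset.card_le_card hcover
      _ ≤ T.card + (T.biUnion _).card := Finset.card_union_le _ _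
      _ ≤ _ := by gcongr; exact Finset.card_biUnion_le
  have hsum : (∑ x ∈ T, ((Finset.univ.filter (fun y => y ≠ x ∧ ¬ G x y)).card : ℝ))
      ≤ (T.card : ℝ) * B := by
    calc _ ≤ ∑ _x ∈ T, B := Finset.sum_le_sum (fun x _ => hB x)
      _ = (T.card : ℝ) * B := by rw [Finset.sum_const, nsmul_eq_mul]
  have := Nat.cast_le (α := ℝ) |>.mpr hcard
  push_cast at this
  linarith


noncomputable def KLvec (k : ℕ) (b : Fin k → Bool) : EuclideanSpace ℝ (Fin k) :=
  WithLp.toLp 2 (fun i => (if b i then 1 else -1) / Real.sqrt k)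

lemma KLvec_norm {k : ℕ} (hk : 0 < k) (b : Fin k → Bool) : ‖KLvec k b‖ = 1 := by
  rw [EuclideanSpace.norm_eq]
  have hkpos : (0:ℝ) < k := Nat.cast_pos.mpr hk
  have h : ∀ i : Fin k, ‖KLvec k b i‖ ^ 2 = 1 / k := by
    intro i
    rw [KLvec]
    rcases Bool.eq_false_or_eq_true (b i) with h | h <;>
      simp [h, div_pow, Real.sq_sqrt hkpos.le, norm_div, abs_of_pos, sq_abs]
  simp_rw [h]
  rw [Finset.sum_const, Finset.card_univ, Fintype.card_fin, nsmul_eq_mul]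
  rw [mul_one_div, div_self (ne_of_gt hkpos), Real.sqrt_one]

lemma KLvec_dist {k : ℕ} (hk : 0 < k) (b c : Fin k → Bool) :
    ‖KLvec k b - KLvec k c‖ = 2 * Real.sqrt ((hammingDist b c : ℝ) / k) := by
  rw [EuclideanSpace.norm_eq]
  have hkpos : (0:ℝ) < k := Nat.cast_pos.mpr hk
  have h : ∀ i : Fin k, ‖(KLvec k b - KLvec k c) i‖ ^ 2
      = if b i ≠ c i then (4:ℝ) / k else 0 := by
    intro i
    have happ : (KLvec k b - KLvec k c) i = KLvec k b i - KLvec k c i := rfl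
    rw [happ, KLvec, KLvec]
    rcases Bool.eq_false_or_eq_true (b i) with hb | hb <;>
      rcases Bool.eq_false_or_eq_true (c i) with hc | hc <;>
      simp [hb, hc, div_sub_div_same, norm_div, div_pow, Real.sq_sqrt hkpos.le, sq_abs] <;>
      · field_simp
        linarith [Real.sq_sqrt hkpos.le]
  simp_rw [h]
  rw [Finset.sum_ite, Finset.sum_const, Finset.sum_const_zero, add_zero, nsmul_eq_mul]
  have hcard : (Finset.univ.filter (fun i : Fin k => b i ≠ c i)).card = hammingDist b c := rfl
  rw [hcard]
  rw [show ((hammingDist b c : ℝ)) * (4 / k) = 2^2 * ((hammingDist b c : ℝ) / k) by ring]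
  rw [Real.sqrt_mul (by positivity), Real.sqrt_sq (by norm_num)]

lemma KL_window {k d : ℕ} (hk : 0 < k) (hdk : d ≤ k) {δ : ℝ} (hδ0 : 0 ≤ δ) (hδ1 : δ ≤ 1)
    (hlo : (1-δ)*(k:ℝ) ≤ 2*d) (hhi : 2*(d:ℝ) ≤ (1+δ)*k) :
    Real.sqrt 2 - Real.sqrt 2 * δ ≤ 2 * Real.sqrt ((d:ℝ)/k) ∧
    2 * Real.sqrt ((d:ℝ)/k) ≤ Real.sqrt 2 + Real.sqrt 2 * δ := by
  have hkpos : (0:ℝ) < k := Nat.cast_pos.mpr hk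
  have hdge : (0:ℝ) ≤ (d:ℝ)/k := by positivity
  have hsq : (2 * Real.sqrt ((d:ℝ)/k))^2 = 4*(d:ℝ)/k := by
    rw [mul_pow, Real.sq_sqrt hdge]; ring
  have s2 : Real.sqrt 2 ^ 2 = 2 := Real.sq_sqrt (by norm_num)
  have s2pos : 0 < Real.sqrt 2 := Real.sqrt_pos.mpr (by norm_num)
  constructor
  · -- lower bound
    have hnn : 0 ≤ Real.sqrt 2 - Real.sqrt 2 * δ := by nlinarith
    have : (Real.sqrt 2 - Real.sqrt 2 * δ)^2 ≤ (2 * Real.sqrt ((d:ℝ)/k))^2 := by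
      rw [hsq]
      have h1 : (Real.sqrt 2 - Real.sqrt 2 * δ)^2 = 2*(1-δ)^2 := by nlinarith
      rw [h1, le_div_iff₀ hkpos]
      nlinarith [mul_le_mul_of_nonneg_right (show (1-δ)^2 ≤ (1-δ) by nlinarith) hkpos.le]
    nlinarith [Real.sqrt_nonneg ((d:ℝ)/k)]
  · have hnn : 0 ≤ Real.sqrt 2 + Real.sqrt 2 * δ := by positivity
    have : (2 * Real.sqrt ((d:ℝ)/k))^2 ≤ (Real.sqrt 2 + Real.sqrt 2 * δ)^2 := by
      rw [hsq]
      have h1 : (Real.sqrt 2 + Real.sqrt 2 * δ)^2 = 2*(1+δ)^2 := by nlinarith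
      rw [h1, div_le_iff₀ hkpos]
      nlinarith
    nlinarith [Real.sqrt_nonneg ((d:ℝ)/k), mul_pos s2pos s2pos]


noncomputable def KLtriv (k : ℕ) (n : ℕ) : EuclideanSpace ℝ (Fin k) :=
  WithLp.toLp 2 (fun i : Fin k => if (i:ℕ) = 0 then 1/((n:ℝ)+1)
    else if (i:ℕ) = 1 then Real.sqrt (1 - (1/((n:ℝ)+1))^2) else 0)

lemma KLtriv_norm {k : ℕ} (hk : 2 ≤ k) (n : ℕ) : ‖KLtriv k n‖ = 1 := by
  set x : ℝ := 1/((n:ℝ)+1) with hx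
  have hx0 : 0 < x := by positivity
  have hx1 : x ≤ 1 := by
    rw [hx, div_le_one (by positivity)]
    have : (0:ℝ) ≤ n := Nat.cast_nonneg n
    linarith
  have hx2 : 0 ≤ 1 - x^2 := by nlinarith
  have i0 : Fin k := ⟨0, by omega⟩
  rw [EuclideanSpace.norm_eq]
  have key : ∀ i : Fin k, ‖KLtriv k n i‖^2 =
      (if i = (⟨0, by omega⟩ : Fin k) then x^2 else 0)
      + (if i = (⟨1, by omega⟩ : Fin k) then 1 - x^2 else 0) := by
    intro i
    rw [KLtriv]
    by_cases h0 : (i:ℕ) = 0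
    · have : i = (⟨0, by omega⟩ : Fin k) := Fin.ext h0
      simp [h0, this, sq_abs, ← hx]
    · by_cases h1 : (i:ℕ) = 1
      · have : i = (⟨1, by omega⟩ : Fin k) := Fin.ext h1
        simp [h0, h1, this, sq_abs, Real.sq_sqrt hx2, ← hx]
      · have e0 : i ≠ (⟨0, by omega⟩ : Fin k) := fun h => h0 (congrArg Fin.val h)
        have e1 : i ≠ (⟨1, by omega⟩ : Fin k) := fun h => h1 (congrArg Fin.val h)
        simp [h0, h1, e0, e1]
  simp_rw [key]
  rw [Finset.sum_add_distrib, Finset.sum_ite_eq' Finset.univ, Finset.sum_ite_eq' Finset.univ]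
  simp


lemma KLvec_inj {k : ℕ} (hk : 0 < k) : Function.Injective (KLvec k) := by
  intro b c h
  by_contra hbc
  have hd : 0 < hammingDist b c := hammingDist_pos.mpr hbc
  have hdist := KLvec_dist hk b c
  rw [h, sub_self, norm_zero] at hdist
  have : (0:ℝ) < 2 * Real.sqrt ((hammingDist b c : ℝ) / k) := by
    apply mul_pos (by norm_num)
    apply Real.sqrt_pos.mpr
    apply div_pos (by exact_mod_cast hd) (by exact_mod_cast hk)
  linarith [hdist ▸ this]

lemma KLtriv_inj {k : ℕ} (hk : 2 ≤ k) : Function.Injective (KLtriv k) := by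
  intro m n h
  have h0 := congrFun (congrArg WithLp.ofLp h) (⟨0, by omega⟩ : Fin k)
  simp only [KLtriv] at h0
  norm_num at h0
  exact_mod_cast h0

set_option maxHeartbeats 1600000 in
theorem kabatjanskii_levenstein_bound :
    ∃ C : ℝ, 0 < C ∧ ∀ k : ℕ, 2 ≤ k → ∀ M : ℝ, 1 ≤ M →
      ∃ S : Finset (EuclideanSpace ℝ (Fin k)),
        (∀ v ∈ S, ‖v‖ = 1) ∧
        (k : ℝ) ^ M ≤ (S.card : ℝ) ∧
        ∀ u ∈ S, ∀ v ∈ S, u ≠ v →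
          Real.sqrt 2 - C * Real.sqrt (M * Real.log k / k) ≤ ‖u - v‖ ∧
          ‖u - v‖ ≤ Real.sqrt 2 + C * Real.sqrt (M * Real.log k / k) := by
  classical
  refine ⟨8, by norm_num, ?_⟩
  intro k hk M hM
  have hk0 : (0:ℝ) < k := by exact_mod_cast (by omega : 0 < k)
  have hk1 : (1:ℝ) < k := by exact_mod_cast (by omega : 1 < k)
  have hlogk : 0 < Real.log k := Real.log_pos hk1
  set L : ℝ := M * Real.log k with hLdef
  have hL : 0 < L := mul_pos (by linarith) hlogk
  set Q : ℝ := M * Real.log k / k with hQdef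
  have hQL : Q = L / k := rfl
  have hQ : 0 < Q := div_pos hL hk0
  have hlog2 : (0.6931471803 : ℝ) < Real.log 2 := Real.log_two_gt_d9
  have hLlog2 : Real.log 2 ≤ L := by
    calc Real.log 2 ≤ Real.log k := Real.log_le_log (by norm_num) (by exact_mod_cast hk)
      _ = 1 * Real.log k := (one_mul _).symm
      _ ≤ M * Real.log k := by nlinarith
  have sqrt2_sq : Real.sqrt 2 ^ 2 = 2 := Real.sq_sqrt (by norm_num)
  have sqrt2_nonneg : 0 ≤ Real.sqrt 2 := Real.sqrt_nonneg 2
  have sqrt2_le : Real.sqrt 2 ≤ 1.6 := by nlinarith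
  by_cases hcase : 25 * L ≤ k
  · -- main case
    set δ : ℝ := 5 * Real.sqrt Q with hδdef
    have hδ0 : 0 < δ := by positivity
    have hδsq : δ^2 = 25 * Q := by
      rw [hδdef, mul_pow, Real.sq_sqrt hQ.le]; norm_num
    have hδsqk : δ^2 * k = 25 * L := by
      rw [hδsq, hQL]; field_simp
    have hδ1 : δ ≤ 1 := by
      have h25 : δ^2 ≤ 1 := by
        have hkk : δ^2 * (k:ℝ) ≤ 1 * k := by rw [one_mul]; linarith [hδsqk]
        exact (mul_le_mul_iff_of_pos_right hk0).mp hkk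
      nlinarith
    set G : (Fin k → Bool) → (Fin k → Bool) → Prop := fun b c =>
      (1-δ)*(k:ℝ) ≤ 2*(hammingDist b c : ℝ) ∧ 2*(hammingDist b c : ℝ) ≤ (1+δ)*k with hGdef
    have hsymm : ∀ b c, G b c → G c b := by
      intro b c h
      rw [hGdef] at *
      rwa [hammingDist_comm c b]
    set B : ℝ := 2 * 2^k * Real.exp (3/4 * δ^2 * (k:ℝ) - δ*δ*(k:ℝ)) with hBdef
    have hB : ∀ x : Fin k → Bool,
        ((Finset.univ.filter (fun y => y ≠ x ∧ ¬ G x y)).card : ℝ) ≤ B := by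
      intro x
      set badJ := (Finset.range (k+1)).filter
        (fun j : ℕ => 2*(j:ℝ) < (1-δ)*k ∨ (1+δ)*(k:ℝ) < 2*j) with hbadJ
      have hsub : Finset.univ.filter (fun y => y ≠ x ∧ ¬ G x y) ⊆
          badJ.biUnion (fun j => Finset.univ.filter
            (fun y : Fin k → Bool => hammingDist x y = j)) := by
        intro y hy
        obtain ⟨-, hyx, hnG⟩ := Finset.mem_filter.mp hy
        refine Finset.mem_biUnion.mpr ⟨hammingDist x y, ?_, ?_⟩
        · rw [hbadJ, Finset.mem_filter]
          constructor
          · rw [Finset.mem_range]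
            have := hammingDist_le_card_fintype (x := x) (y := y)
            rw [Fintype.card_fin] at this
            omega
          · rw [hGdef] at hnG
            rw [not_and_or, not_le, not_le] at hnG
            exact hnG
        · exact Finset.mem_filter.mpr ⟨Finset.mem_univ _, rfl⟩
      have hcard1 : (Finset.univ.filter (fun y => y ≠ x ∧ ¬ G x y)).card
          ≤ ∑ j ∈ badJ, k.choose j := by
        calc _ ≤ (badJ.biUnion _).card := Finset.card_le_card hsub
          _ ≤ ∑ j ∈ badJ, (Finset.univ.filter
              (fun y : Fin k → Bool => hammingDist x y = j)).card := Finset.card_biUnion_le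
          _ = ∑ j ∈ badJ, k.choose j := Finset.sum_congr rfl
              (fun j _ => KL_sphere_card k x j)
      have hcast : ((Finset.univ.filter (fun y => y ≠ x ∧ ¬ G x y)).card : ℝ)
          ≤ ∑ j ∈ badJ, (k.choose j : ℝ) := by
        exact_mod_cast hcard1
      refine hcast.trans ?_
      have htail := KL_tail k (δ := δ) (s := δ) hδ0.le hδ1 hδ0.le
      rw [hBdef]
      refine le_trans ?_ htail
      apply le_of_eq
      apply Finset.sum_congr _ (fun _ _ => rfl)
      ext j
      simp only [hbadJ, Finset.mem_filter]
    obtain ⟨T, hTgood, hTcard⟩ := KL_greedy G hsymm B hB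
    have hfin : (Fintype.card (Fin k → Bool) : ℝ) = 2^k := by
      rw [Fintype.card_fun, Fintype.card_bool, Fintype.card_fin]
      push_cast
      ring
    rw [hfin] at hTcard
    -- numeric bound: k^M ≤ T.card
    have hexpval : 3/4 * δ^2 * (k:ℝ) - δ*δ*(k:ℝ) = -(25/4 * L) := by
      have : δ*δ = δ^2 := (sq δ).symm
      rw [this]
      nlinarith [hδsqk]
    have h2k : Real.exp (25/4 * L) ≤ 2^k := by
      have h1 : 25/4 * L ≤ (k:ℝ) * Real.log 2 := by nlinarith
      calc Real.exp (25/4 * L) ≤ Real.exp ((k:ℝ) * Real.log 2) := Real.exp_le_exp.mpr h1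
        _ = (2:ℝ)^k := by
            rw [Real.exp_nat_mul, Real.exp_log (by norm_num)]
    have hBle : 1 + B ≤ 3 * 2^k * Real.exp (-(25/4 * L)) := by
      rw [hBdef, hexpval]
      have hexppos : 0 < Real.exp (-(25/4 * L)) := Real.exp_pos _
      have : 1 ≤ 2^k * Real.exp (-(25/4 * L)) := by
        rw [Real.exp_neg, ← div_eq_mul_inv, le_div_iff₀ (Real.exp_pos _), one_mul]
        exact h2k
      linarith
    have hTpos : 0 ≤ (T.card : ℝ) := Nat.cast_nonneg _
    have hmain : Real.exp (25/4 * L) ≤ 3 * T.card := by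
      have h2kpos : (0:ℝ) < 2^k := by positivity
      have hEc : Real.exp (-(25/4 * L)) * Real.exp (25/4 * L) = 1 := by
        rw [← Real.exp_add]; simp
      have step : (2:ℝ)^k * Real.exp (25/4 * L)
          ≤ ((T.card:ℝ) * (3 * 2^k * Real.exp (-(25/4 * L)))) * Real.exp (25/4 * L) := by
        apply mul_le_mul_of_nonneg_right _ (Real.exp_pos _).le
        exact hTcard.trans (mul_le_mul_of_nonneg_left hBle hTpos)
      have step2 : (2:ℝ)^k * Real.exp (25/4 * L) ≤ (T.card:ℝ) * 3 * 2^k := by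
        calc (2:ℝ)^k * Real.exp (25/4 * L) ≤ _ := step
          _ = (T.card:ℝ) * 3 * 2^k * (Real.exp (-(25/4 * L)) * Real.exp (25/4 * L)) := by
              ring
          _ = (T.card:ℝ) * 3 * 2^k := by rw [hEc, mul_one]
      nlinarith [step2, h2kpos, Real.exp_pos (25/4 * L)]
    have hkM : (k:ℝ)^M = Real.exp L := by
      rw [Real.rpow_def_of_pos hk0, hLdef, mul_comm]
    have hfinal : (k:ℝ)^M ≤ (T.card : ℝ) := by
      rw [hkM]
      have hfac : Real.exp (25/4 * L) = Real.exp L * Real.exp (21/4 * L) := by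
        rw [← Real.exp_add]; ring_nf
      have h3 : (3:ℝ) ≤ Real.exp (21/4 * L) := by
        have := Real.add_one_le_exp (21/4 * L)
        nlinarith
      rw [hfac] at hmain
      have h4 : Real.exp L * 3 ≤ Real.exp L * Real.exp (21/4 * L) :=
        mul_le_mul_of_nonneg_left h3 (Real.exp_pos L).le
      linarith
    -- build S
    refine ⟨T.image (KLvec k), ?_, ?_, ?_⟩
    · intro v hv
      obtain ⟨b, -, rfl⟩ := Finset.mem_image.mp hv
      exact KLvec_norm (by omega) b
    · rw [Finset.card_image_of_injective T (KLvec_inj (by omega))]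
      exact hfinal
    · intro u hu v hv huv
      obtain ⟨b, hb, rfl⟩ := Finset.mem_image.mp hu
      obtain ⟨c, hc, rfl⟩ := Finset.mem_image.mp hv
      have hbc : b ≠ c := fun h => huv (h ▸ rfl)
      obtain ⟨hGlo, hGhi⟩ := hTgood b hb c hc hbc
      have hdk : hammingDist b c ≤ k := by
        have := hammingDist_le_card_fintype (x := b) (y := c)
        rwa [Fintype.card_fin] at this
      have hwin := KL_window (by omega) hdk hδ0.le hδ1 hGlo hGhi
      rw [KLvec_dist (by omega) b c]
      have hslack : Real.sqrt 2 * δ ≤ 8 * Real.sqrt Q := by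
        rw [hδdef]
        have hsQ : 0 ≤ Real.sqrt Q := Real.sqrt_nonneg _
        nlinarith
      have hQrw : Real.sqrt (M * Real.log k / k) = Real.sqrt Q := by rw [hQdef]
      rw [hQrw]
      constructor
      · linarith [hwin.1]
      · linarith [hwin.2]
  · -- trivial case: k < 25 L, slack is at least sqrt 2
    rw [not_le] at hcase
    have hslack : Real.sqrt 2 ≤ 8 * Real.sqrt Q := by
      have h2Q : (2:ℝ) ≤ 64 * Q := by
        have hkL : 2 * (k:ℝ) ≤ 64 * L := by linarith
        calc (2:ℝ) = 2*(k:ℝ)/k := by field_simp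
          _ ≤ 64*L/(k:ℝ) := by gcongr
          _ = 64 * Q := by rw [hQL]; ring
      calc Real.sqrt 2 ≤ Real.sqrt (64 * Q) := Real.sqrt_le_sqrt h2Q
        _ = 8 * Real.sqrt Q := by
            rw [Real.sqrt_mul (by norm_num), show (64:ℝ) = 8^2 by norm_num,
              Real.sqrt_sq (by norm_num)]
    set N := ⌈(k:ℝ)^M⌉₊ with hN
    refine ⟨(Finset.range N).image (KLtriv k), ?_, ?_, ?_⟩
    · intro v hv
      obtain ⟨n, -, rfl⟩ := Finset.mem_image.mp hv
      exact KLtriv_norm hk n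
    · rw [Finset.card_image_of_injective _ (KLtriv_inj hk), Finset.card_range]
      exact Nat.le_ceil _
    · intro u hu v hv huv
      obtain ⟨m, -, rfl⟩ := Finset.mem_image.mp hu
      obtain ⟨n, -, rfl⟩ := Finset.mem_image.mp hv
      have hnu : ‖KLtriv k m‖ = 1 := KLtriv_norm hk m
      have hnv : ‖KLtriv k n‖ = 1 := KLtriv_norm hk n
      have htri : ‖KLtriv k m - KLtriv k n‖ ≤ 2 := by
        calc ‖KLtriv k m - KLtriv k n‖ ≤ ‖KLtriv k m‖ + ‖KLtriv k n‖ := norm_sub_le _ _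
          _ = 2 := by rw [hnu, hnv]; norm_num
      have hQrw : Real.sqrt (M * Real.log k / k) = Real.sqrt Q := by rw [hQdef]
      rw [hQrw]
      constructor
      · have := norm_nonneg (KLtriv k m - KLtriv k n)
        linarith
      · nlinarith
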